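/- Under Assumptions 1–3, for every N ≥ d (with d ≥ 1) the tail probability function p_N : [0,∞) → [0,1] is monotonically nondecreasing and upper semicontinuous at every α ∈ [0,∞). -/

import Mathlib

open MeasureTheory Set Filter Topology

/-- Superlevel sets (strict) of a function lsc on a measurable set are measurable. -/
lemma meas_superlevel_aux {β : Type*} [TopologicalSpace β] [MeasurableSpace β]
    [OpensMeasurableSpace β] {g : β → ℝ} {S : Set β} (hS : MeasurableSet S)
    (hg : LowerSemicontinuousOn g S) (s : ℝ) :
    MeasurableSet {x ∈ S | s < g x} := by
  have key : ∀ x ∈ {x ∈ S | s < g x}, ∃ U, IsOpen U ∧ x ∈ U ∧ ∀ y ∈ U ∩ S, s < g y := by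
    rintro x ⟨hx, hgx⟩
    have h := hg x hx s hgx
    rw [eventually_nhdsWithin_iff, eventually_nhds_iff] at h
    obtain ⟨t, ht, hto, hxt⟩ := h
    exact ⟨t, hto, hxt, fun y hy => ht y hy.1 hy.2⟩
  choose! U hUo hxU hUg using key
  have heq : {x ∈ S | s < g x} = S ∩ ⋃ x ∈ {x ∈ S | s < g x}, U x := by
    ext y
    constructor
    · intro hy
      exact ⟨hy.1, mem_biUnion hy (hxU y hy)⟩
    · rintro ⟨hyS, hyU⟩
      simp only [mem_iUnion] at hyU
      obtain ⟨x, hx, hxy⟩ := hyU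
      exact ⟨hyS, hUg x hx y ⟨hxy, hyS⟩⟩
  rw [heq]
  exact hS.inter (isOpen_biUnion fun x hx => hUo x hx).measurableSet

/-- Non-strict superlevel sets of a function lsc on a measurable set are measurable. -/
lemma meas_superlevel_aux' {β : Type*} [TopologicalSpace β] [MeasurableSpace β]
    [OpensMeasurableSpace β] {g : β → ℝ} {S : Set β} (hS : MeasurableSet S)
    (hg : LowerSemicontinuousOn g S) (t : ℝ) :
    MeasurableSet {x ∈ S | t ≤ g x} := by
  have heq : {x ∈ S | t ≤ g x} = ⋂ n : ℕ, {x ∈ S | t - 1 / (n + 1) < g x} := by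
    ext y
    simp only [mem_iInter, mem_setOf_eq]
    constructor
    · intro hy n
      have hp : (0:ℝ) < 1 / ((n:ℝ)+1) := by positivity
      exact ⟨hy.1, lt_of_lt_of_le (by linarith) hy.2⟩
    · intro hy
      refine ⟨(hy 0).1, ?_⟩
      by_contra h
      push_neg at h
      obtain ⟨n, hn⟩ := exists_nat_one_div_lt (sub_pos.mpr h)
      have := (hy n).2
      linarith
  rw [heq]
  exact MeasurableSet.iInter fun n => meas_superlevel_aux hS hg _

/-- Scenario optimal value `g_N(ω) = inf { c·x : x ∈ X, f(x, δ_i) ≤ 0, i = 1,…,N }`. -/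
noncomputable def scenVal {d m N : ℕ} (X : Set (EuclideanSpace ℝ (Fin d)))
    (c : EuclideanSpace ℝ (Fin d))
    (f : EuclideanSpace ℝ (Fin d) → EuclideanSpace ℝ (Fin m) → ℝ)
    (ω : Fin N → EuclideanSpace ℝ (Fin m)) : ℝ :=
  sInf ((fun x => ∑ i, c i * x i) '' {x ∈ X | ∀ i, f x (ω i) ≤ 0})

/-- Robust optimal value `J* = inf { c·x : x ∈ X, f(x,δ) ≤ 0 for all δ ∈ Δ }`. -/
noncomputable def robustVal {d m : ℕ} (X : Set (EuclideanSpace ℝ (Fin d)))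
    (c : EuclideanSpace ℝ (Fin d))
    (f : EuclideanSpace ℝ (Fin d) → EuclideanSpace ℝ (Fin m) → ℝ)
    (Δ : Set (EuclideanSpace ℝ (Fin m))) : ℝ :=
  sInf ((fun x => ∑ i, c i * x i) '' {x ∈ X | ∀ δ ∈ Δ, f x δ ≤ 0})

/-- Tail probability `p_N(α) = ℙ^N { ω ∈ Δ^N : J* − α ≤ g_N(ω) }`. -/
noncomputable def tailProb {d m : ℕ} (X : Set (EuclideanSpace ℝ (Fin d)))
    (c : EuclideanSpace ℝ (Fin d))
    (f : EuclideanSpace ℝ (Fin d) → EuclideanSpace ℝ (Fin m) → ℝ)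
    (Δ : Set (EuclideanSpace ℝ (Fin m)))
    (ℙ : Measure (EuclideanSpace ℝ (Fin m))) (N : ℕ) (α : ℝ) : ENNReal :=
  (Measure.pi fun _ : Fin N => ℙ)
    {ω : Fin N → EuclideanSpace ℝ (Fin m) |
      (∀ i, ω i ∈ Δ) ∧ robustVal X c f Δ - α ≤ scenVal X c f ω}

/-- The scenario value is lower semicontinuous on `Δ^N`. -/
lemma scenVal_lsc {d m N : ℕ} (X : Set (EuclideanSpace ℝ (Fin d)))
    (c : EuclideanSpace ℝ (Fin d))
    (Δ : Set (EuclideanSpace ℝ (Fin m)))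
    (f : EuclideanSpace ℝ (Fin d) → EuclideanSpace ℝ (Fin m) → ℝ)
    (hlsc : LowerSemicontinuousOn (Function.uncurry f) (X ×ˢ Δ))
    (hXcomp : IsCompact X)
    (hfeas : ∃ x ∈ X, ∀ δ ∈ Δ, f x δ ≤ 0) :
    LowerSemicontinuousOn (scenVal X c f) {ω : Fin N → EuclideanSpace ℝ (Fin m) | ∀ i, ω i ∈ Δ} := by
  set L : EuclideanSpace ℝ (Fin d) → ℝ := fun x => ∑ i, c i * x i with hL
  have hLcont : Continuous L := by
    apply continuous_finset_sum
    intro i _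
    exact continuous_const.mul ((continuous_apply i).comp (PiLp.continuous_ofLp 2 _))
  have hbdd : ∀ (ω : Fin N → EuclideanSpace ℝ (Fin m)),
      BddBelow (L '' {x ∈ X | ∀ i, f x (ω i) ≤ 0}) := fun ω =>
    ((hXcomp.image hLcont).bddBelow).mono (image_mono (sep_subset _ _))
  obtain ⟨x₀, hx₀X, hx₀f⟩ := hfeas
  intro ω hω t ht
  by_contra hcon
  rw [Filter.not_eventually] at hcon
  have hfreq : ∃ᶠ ω' in 𝓝[{ω' : Fin N → EuclideanSpace ℝ (Fin m) | ∀ i, ω' i ∈ Δ}] ω,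
      (¬ t < scenVal X c f ω') ∧ (∀ i, ω' i ∈ Δ) :=
    hcon.and_eventually self_mem_nhdsWithin
  obtain ⟨ωs, hωs_tendsto, hωs⟩ := exists_seq_forall_of_frequently hfreq
  -- pick nearly optimal points
  have hpick : ∀ n : ℕ, ∃ x, (x ∈ X ∧ ∀ i, f x (ωs n i) ≤ 0) ∧ L x < t + 1 / (n + 1) := by
    intro n
    have hne : (L '' {x ∈ X | ∀ i, f x (ωs n i) ≤ 0}).Nonempty :=
      ⟨L x₀, mem_image_of_mem _ ⟨hx₀X, fun i => hx₀f _ ((hωs n).2 i)⟩⟩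
    have hlt : sInf (L '' {x ∈ X | ∀ i, f x (ωs n i) ≤ 0}) < t + 1 / (n + 1) := by
      have : scenVal X c f (ωs n) ≤ t := not_lt.mp (hωs n).1
      have hpos : (0 : ℝ) < 1 / (n + 1) := by positivity
      calc sInf (L '' {x ∈ X | ∀ i, f x (ωs n i) ≤ 0}) = scenVal X c f (ωs n) := rfl
        _ ≤ t := this
        _ < t + 1 / (n + 1) := by linarith
    obtain ⟨a, ⟨x, hx, rfl⟩, ha⟩ := exists_lt_of_csInf_lt hne hlt
    exact ⟨x, hx, ha⟩
  choose xs hxs hxsL using hpick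
  obtain ⟨a, haX, φ, hφ, hφtendsto⟩ := hXcomp.tendsto_subseq (fun n => (hxs n).1)
  have hω_tendsto : Tendsto ωs atTop (𝓝 ω) := hωs_tendsto.mono_right nhdsWithin_le_nhds
  -- the limit point is feasible for ω
  have hfa : ∀ i, f a (ω i) ≤ 0 := by
    intro i
    by_contra hpos
    push_neg at hpos
    have hmem : (a, ω i) ∈ X ×ˢ Δ := ⟨haX, hω i⟩
    have hev := hlsc (a, ω i) hmem 0 hpos
    have htCoord : Tendsto (fun n => (xs (φ n), ωs (φ n) i)) atTop (𝓝 (a, ω i)) := by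
      refine Tendsto.prodMk_nhds hφtendsto ?_
      exact ((continuous_apply i).tendsto ω).comp (hω_tendsto.comp hφ.tendsto_atTop)
    have htIn : Tendsto (fun n => (xs (φ n), ωs (φ n) i)) atTop (𝓝[X ×ˢ Δ] (a, ω i)) :=
      tendsto_nhdsWithin_of_tendsto_nhds_of_eventually_within _ htCoord
        (Eventually.of_forall fun n => ⟨(hxs (φ n)).1, (hωs (φ n)).2 i⟩)
    have := (htIn.eventually hev).exists
    obtain ⟨n, hn⟩ := this
    exact absurd ((hxs (φ n)).2 i) (not_le.mpr (by simpa [Function.uncurry] using hn))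
  -- so scenVal ω ≤ L a ≤ t, contradiction
  have h1 : scenVal X c f ω ≤ L a :=
    csInf_le (hbdd ω) (mem_image_of_mem _ ⟨haX, hfa⟩)
  have h2 : L a ≤ t := by
    have hA : Tendsto (fun n => L (xs (φ n))) atTop (𝓝 (L a)) :=
      (hLcont.tendsto a).comp hφtendsto
    have hB : Tendsto (fun n : ℕ => t + 1 / ((n : ℝ) + 1)) atTop (𝓝 (t + 0)) :=
      tendsto_const_nhds.add tendsto_one_div_add_atTop_nhds_zero_nat
    rw [add_zero] at hB
    refine le_of_tendsto_of_tendsto' hA hB fun n => ?_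
    have h3 : L (xs (φ n)) < t + 1 / ((φ n : ℝ) + 1) := hxsL (φ n)
    have h4 : (1 : ℝ) / ((φ n : ℝ) + 1) ≤ 1 / ((n : ℝ) + 1) := by
      have hnφ : (n : ℝ) ≤ (φ n : ℝ) := by exact_mod_cast hφ.le_apply
      apply one_div_le_one_div_of_le (by positivity)
      linarith
    linarith
  linarith

/-- Under Assumptions 1–3, for every N ≥ d (d ≥ 1), the tail probability function p_N
is monotonically nondecreasing and upper semicontinuous at every α ∈ [0,∞). -/
theorem stmt_5 {d m : ℕ} (hd : 1 ≤ d)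
    (X : Set (EuclideanSpace ℝ (Fin d))) (c : EuclideanSpace ℝ (Fin d))
    (Δ : Set (EuclideanSpace ℝ (Fin m))) (hΔne : Δ.Nonempty)
    (f : EuclideanSpace ℝ (Fin d) → EuclideanSpace ℝ (Fin m) → ℝ)
    -- Assumption 1
    (hlsc : LowerSemicontinuousOn (Function.uncurry f) (X ×ˢ Δ))
    (hXcomp : IsCompact X)
    -- Assumption 2
    (hfeas : ∃ x ∈ X, ∀ δ ∈ Δ, f x δ ≤ 0)
    -- Assumption 3
    (hXconv : Convex ℝ X)
    (hconv : ∀ δ ∈ Δ, ConvexOn ℝ X fun x => f x δ)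
    -- probability measure supported on Δ
    (ℙ : Measure (EuclideanSpace ℝ (Fin m))) [IsProbabilityMeasure ℙ]
    (hΔmeas : MeasurableSet Δ) (hΔone : ℙ Δ = 1)
    (N : ℕ) (hN : d ≤ N) :
    MonotoneOn (tailProb X c f Δ ℙ N) (Set.Ici 0) ∧
      UpperSemicontinuousOn (tailProb X c f Δ ℙ N) (Set.Ici 0) := by
  classical
  set μ := (Measure.pi fun _ : Fin N => ℙ) with hμ
  set J := robustVal X c f Δ with hJ
  set g := scenVal X c f (N := N) with hg
  set S : Set (Fin N → EuclideanSpace ℝ (Fin m)) := {ω | ∀ i, ω i ∈ Δ} with hS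
  have hSmeas : MeasurableSet S := by
    have : S = ⋂ i : Fin N, (fun ω : Fin N → EuclideanSpace ℝ (Fin m) => ω i) ⁻¹' Δ := by
      ext ω; simp [hS]
    rw [this]
    exact MeasurableSet.iInter fun i => (measurable_pi_apply i) hΔmeas
  have hglsc : LowerSemicontinuousOn g S := scenVal_lsc X c Δ f hlsc hXcomp hfeas
  have hMmeas : ∀ t : ℝ, MeasurableSet {ω ∈ S | t ≤ g ω} := fun t =>
    meas_superlevel_aux' hSmeas hglsc t
  have hsetEq : ∀ α : ℝ, {ω : Fin N → EuclideanSpace ℝ (Fin m) |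
      (∀ i, ω i ∈ Δ) ∧ robustVal X c f Δ - α ≤ scenVal X c f ω} = {ω ∈ S | J - α ≤ g ω} := by
    intro α; rfl
  have hmono : MonotoneOn (tailProb X c f Δ ℙ N) (Set.Ici 0) := by
    intro α₁ _ α₂ _ h12
    unfold tailProb
    apply measure_mono
    rintro ω ⟨h1, h2⟩
    exact ⟨h1, le_trans (by linarith) h2⟩
  refine ⟨hmono, ?_⟩
  intro α hα y hy
  -- continuity from above along α + 1/(n+1)
  have hAnti : Antitone (fun n : ℕ => {ω ∈ S | J - (α + 1 / (n + 1)) ≤ g ω}) := by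
    intro n₁ n₂ h12
    rintro ω ⟨h1, h2⟩
    refine ⟨h1, le_trans ?_ h2⟩
    have : (1 : ℝ) / ((n₂ : ℝ) + 1) ≤ 1 / ((n₁ : ℝ) + 1) := by
      apply one_div_le_one_div_of_le (by positivity)
      exact_mod_cast by simp [h12]
    linarith
  have hiInter : (⋂ n : ℕ, {ω ∈ S | J - (α + 1 / (n + 1)) ≤ g ω}) = {ω ∈ S | J - α ≤ g ω} := by
    ext ω
    simp only [mem_iInter, mem_setOf_eq]
    constructor
    · intro h
      refine ⟨(h 0).1, ?_⟩
      by_contra hc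
      push_neg at hc
      obtain ⟨n, hn⟩ := exists_nat_one_div_lt (sub_pos.mpr hc)
      have := (h n).2
      linarith
    · intro h n
      have hp : (0:ℝ) < 1 / ((n:ℝ)+1) := by positivity
      exact ⟨h.1, le_trans (by linarith) h.2⟩
  have htendsto : Tendsto (fun n : ℕ => μ {ω ∈ S | J - (α + 1 / (n + 1)) ≤ g ω}) atTop
      (𝓝 (μ {ω ∈ S | J - α ≤ g ω})) := by
    have := tendsto_measure_iInter_atTop (μ := μ)
      (s := fun n : ℕ => {ω ∈ S | J - (α + 1 / (n + 1)) ≤ g ω})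
      (fun n => (hMmeas _).nullMeasurableSet) hAnti ⟨0, measure_ne_top _ _⟩
    rwa [hiInter] at this
  have hpα : tailProb X c f Δ ℙ N α = μ {ω ∈ S | J - α ≤ g ω} := rfl
  rw [hpα] at hy
  obtain ⟨n, hn⟩ := (htendsto.eventually (eventually_lt_nhds hy)).exists
  -- neighborhood: Iio (α + 1/(n+1))
  have hmem : Set.Iio (α + 1 / (n + 1)) ∈ 𝓝[Set.Ici 0] α := by
    apply mem_nhdsWithin_of_mem_nhds
    apply Iio_mem_nhds
    have : (0:ℝ) < 1 / ((n:ℝ)+1) := by positivity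
    linarith
  filter_upwards [hmem] with α' hα'
  calc tailProb X c f Δ ℙ N α' = μ {ω ∈ S | J - α' ≤ g ω} := rfl
    _ ≤ μ {ω ∈ S | J - (α + 1 / (n + 1)) ≤ g ω} := by
        apply measure_mono
        rintro ω ⟨h1, h2⟩
        have : α' ≤ α + 1 / (n + 1) := le_of_lt hα'
        exact ⟨h1, le_trans (by linarith) h2⟩
    _ < y := hn
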